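/- Let Ψ : ℝ^d → ℝ be convex and L-smooth with minimizer w*, and suppose the gradient-descent-with-error iterates satisfy w^{(t+1)} = w^{(t)} − η(∇Ψ(w^{(t)}) + Λ^{(t)}) with ‖Λ^{(t)}‖ ≤ ε for all t, step size η ≤ 1/L, and all iterates lie in a ball of radius R around w*. Then the averaged iterate w̄ = (1/T) Σ_{t=1}^T w^{(t)} satisfies Ψ(w̄) − Ψ(w*) ≤ ‖w^{(0)} − w*‖²/(2ηT) + R ε. -/

import Mathlib

open Finset

section aux

variable {E : Type*} [NormedAddCommGroup E] [InnerProductSpace ℝ E] [CompleteSpace E]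

lemma aux_hasDerivAt_line (Ψ : E → ℝ) (hdiff : Differentiable ℝ Ψ) (x v : E) (t : ℝ) :
    HasDerivAt (fun s : ℝ => Ψ (s • v + x))
      (inner ℝ (gradient Ψ (t • v + x)) v : ℝ) t := by
  have hc : HasDerivAt (fun s : ℝ => s • v + x) v t := by
    simpa using ((hasDerivAt_id t).smul_const v).add_const x
  have hg := (hdiff (t • v + x)).hasGradientAt
  rw [hasGradientAt_iff_hasFDerivAt] at hg
  have := hg.comp_hasDerivAt t hc
  simp at this ⊢
  exact this

lemma aux_first_order (Ψ : E → ℝ) (hconv : ConvexOn ℝ Set.univ Ψ)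
    (hdiff : Differentiable ℝ Ψ) (x y : E) :
    Ψ x + inner ℝ (gradient Ψ x) (y - x) ≤ Ψ y := by
  set g : ℝ → ℝ := fun s => Ψ (s • (y - x) + x) with hgdef
  have hgc : ConvexOn ℝ Set.univ g := by
    have h := hconv.comp_affineMap (AffineMap.lineMap x y : ℝ →ᵃ[ℝ] E)
    have he : (Ψ ∘ (AffineMap.lineMap x y : ℝ →ᵃ[ℝ] E)) = g := by
      funext s
      simp only [hgdef, Function.comp_apply, AffineMap.lineMap_apply_module]
      congr 1
      module
    rw [he] at h
    simpa using h
  have hd := aux_hasDerivAt_line Ψ hdiff x (y - x) 0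
  have hslope := hgc.le_slope_of_hasDerivAt (Set.mem_univ (0:ℝ)) (Set.mem_univ (1:ℝ))
    zero_lt_one hd
  have h0 : g 0 = Ψ x := by simp [hgdef]
  have h1 : g 1 = Ψ y := by simp [hgdef]
  have hs : slope g 0 1 = Ψ y - Ψ x := by
    rw [slope_def_field]; rw [h0, h1]; ring
  rw [hs] at hslope
  simp only [zero_smul, zero_add] at hslope
  linarith

lemma aux_descent (Ψ : E → ℝ) (hdiff : Differentiable ℝ Ψ) (L : ℝ)
    (hsm : ∀ x y, ‖gradient Ψ x - gradient Ψ y‖ ≤ L * ‖x - y‖) (x y : E) :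
    Ψ y ≤ Ψ x + inner ℝ (gradient Ψ x) (y - x) + L / 2 * ‖y - x‖ ^ 2 := by
  set v := y - x with hv
  set φ : ℝ → ℝ := fun t => Ψ (t • v + x) - t * inner ℝ (gradient Ψ x) v
      - (L / 2 * ‖v‖ ^ 2) * t ^ 2 with hφ
  have hφd : ∀ t : ℝ, HasDerivAt φ
      ((inner ℝ (gradient Ψ (t • v + x)) v : ℝ) - inner ℝ (gradient Ψ x) v
        - (L / 2 * ‖v‖ ^ 2) * (2 * t)) t := by
    intro t
    have h1 := aux_hasDerivAt_line Ψ hdiff x v t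
    have h2 : HasDerivAt (fun s : ℝ => s * inner ℝ (gradient Ψ x) v)
        (inner ℝ (gradient Ψ x) v : ℝ) t := by
      simpa using (hasDerivAt_id t).mul_const (inner ℝ (gradient Ψ x) v : ℝ)
    have h3 : HasDerivAt (fun s : ℝ => (L / 2 * ‖v‖ ^ 2) * s ^ 2)
        ((L / 2 * ‖v‖ ^ 2) * (2 * t)) t := by
      have := (hasDerivAt_pow 2 t).const_mul (L / 2 * ‖v‖ ^ 2)
      simpa [mul_comm, mul_assoc, mul_left_comm] using this
    exact (h1.sub h2).sub h3
  have hmono : AntitoneOn φ (Set.Icc (0:ℝ) 1) := by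
    apply antitoneOn_of_deriv_nonpos (convex_Icc 0 1)
    · exact fun t _ => (hφd t).differentiableAt.continuousAt.continuousWithinAt
    · exact fun t _ => (hφd t).differentiableAt.differentiableWithinAt
    · intro t ht
      rw [interior_Icc] at ht
      rw [(hφd t).deriv]
      have hb : (inner ℝ (gradient Ψ (t • v + x)) v : ℝ) - inner ℝ (gradient Ψ x) v
          ≤ L * t * ‖v‖ ^ 2 := by
        calc (inner ℝ (gradient Ψ (t • v + x)) v : ℝ) - inner ℝ (gradient Ψ x) v
            = inner ℝ (gradient Ψ (t • v + x) - gradient Ψ x) v := by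
              rw [inner_sub_left]
          _ ≤ ‖gradient Ψ (t • v + x) - gradient Ψ x‖ * ‖v‖ := real_inner_le_norm _ _
          _ ≤ (L * ‖(t • v + x) - x‖) * ‖v‖ :=
              mul_le_mul_of_nonneg_right (hsm _ _) (norm_nonneg _)
          _ = L * t * ‖v‖ ^ 2 := by
              have : (t • v + x) - x = t • v := by abel
              rw [this, norm_smul, Real.norm_eq_abs, abs_of_pos ht.1]
              ring
      nlinarith [hb]
  have hkey := hmono (Set.mem_Icc.mpr ⟨le_refl 0, zero_le_one⟩)
    (Set.mem_Icc.mpr ⟨zero_le_one, le_refl 1⟩) zero_le_one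
  have h0 : φ 0 = Ψ x := by simp [hφ]
  have h1 : φ 1 = Ψ y - inner ℝ (gradient Ψ x) v - L / 2 * ‖v‖ ^ 2 := by
    simp [hφ, hv]
  rw [h0, h1] at hkey
  linarith

end aux

/-- Inexact gradient descent on a convex L-smooth function: the averaged iterate satisfies
Ψ(w̄) − Ψ(w*) ≤ ‖w₀ − w*‖²/(2ηT) + Rε. -/
theorem inexact_gd_convex_convergence {d : ℕ}
    (Ψ : EuclideanSpace ℝ (Fin d) → ℝ) (L η ε R : ℝ)
    (hL : 0 < L) (hη0 : 0 < η) (hηL : η ≤ 1 / L)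
    (hconv : ConvexOn ℝ Set.univ Ψ) (hdiff : Differentiable ℝ Ψ)
    (hsm : ∀ x y, ‖gradient Ψ x - gradient Ψ y‖ ≤ L * ‖x - y‖)
    (wstar : EuclideanSpace ℝ (Fin d)) (hmin : ∀ w, Ψ wstar ≤ Ψ w)
    (w Λ : ℕ → EuclideanSpace ℝ (Fin d))
    (hupd : ∀ t, w (t + 1) = w t - η • (gradient Ψ (w t) + Λ t))
    (herr : ∀ t, ‖Λ t‖ ≤ ε)
    (hR : ∀ t, ‖w t - wstar‖ ≤ R)
    (T : ℕ) (hT : 0 < T) :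
    Ψ ((T : ℝ)⁻¹ • ∑ t ∈ Finset.Icc 1 T, w t) - Ψ wstar ≤
      ‖w 0 - wstar‖ ^ 2 / (2 * η * T) + R * ε := by
  have hεR : ∀ t : ℕ, (inner ℝ (Λ t) (wstar - w (t+1)) : ℝ) ≤ R * ε := by
    intro t
    calc (inner ℝ (Λ t) (wstar - w (t+1)) : ℝ)
        ≤ ‖Λ t‖ * ‖wstar - w (t+1)‖ := real_inner_le_norm _ _
      _ ≤ ε * R := by
          have h1 : ‖wstar - w (t+1)‖ ≤ R := by rw [norm_sub_rev]; exact hR _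
          exact mul_le_mul (herr t) h1 (norm_nonneg _) ((norm_nonneg _).trans (herr t))
      _ = R * ε := mul_comm _ _
  -- per-step bound
  have key : ∀ t : ℕ, Ψ (w (t+1)) - Ψ wstar ≤
      (‖w t - wstar‖ ^ 2 - ‖w (t+1) - wstar‖ ^ 2) / (2 * η) + R * ε := by
    intro t
    have hdesc := aux_descent Ψ hdiff L hsm (w t) (w (t+1))
    have hfo := aux_first_order Ψ hconv hdiff (w t) wstar
    -- relate inner products via the update rule
    have hstep : w t - w (t+1) = η • (gradient Ψ (w t) + Λ t) := by
      rw [hupd t]; abel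
    -- three-point identity
    have hident : 2 * (inner ℝ (w t - w (t+1)) (w (t+1) - wstar) : ℝ)
        = ‖w t - wstar‖ ^ 2 - ‖w (t+1) - wstar‖ ^ 2 - ‖w t - w (t+1)‖ ^ 2 := by
      have h := @norm_add_sq_real _ _ _ (w t - w (t+1)) (w (t+1) - wstar)
      have he : (w t - w (t+1)) + (w (t+1) - wstar) = w t - wstar := by abel
      rw [he] at h
      linarith
    -- inner of gradient with step
    have hinner : (inner ℝ (gradient Ψ (w t)) (w (t+1) - wstar) : ℝ)
        = η⁻¹ * (inner ℝ (w t - w (t+1)) (w (t+1) - wstar) : ℝ)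
          - inner ℝ (Λ t) (w (t+1) - wstar) := by
      have h1 : (gradient Ψ (w t)) = η⁻¹ • (w t - w (t+1)) - Λ t := by
        rw [hstep, smul_smul, inv_mul_cancel₀ hη0.ne', one_smul]; abel
      rw [h1, inner_sub_left, real_inner_smul_left]
    -- smoothness term control: L ≤ 1/η
    have hLη : L ≤ η⁻¹ := by
      have h1 : η * L ≤ 1 := by
        have := (le_div_iff₀ hL).mp hηL
        linarith
      have h2 : η * η⁻¹ = 1 := mul_inv_cancel₀ hη0.ne'
      nlinarith
    have hεbd := hεR t
    have hinner2 : (inner ℝ (Λ t) (wstar - w (t+1)) : ℝ)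
        = - inner ℝ (Λ t) (w (t+1) - wstar) := by
      rw [← inner_neg_right]; congr 1; abel
    -- combine
    have hcs : (inner ℝ (gradient Ψ (w t)) (w (t+1) - w t) : ℝ)
        - (inner ℝ (gradient Ψ (w t)) (wstar - w t) : ℝ)
        = (inner ℝ (gradient Ψ (w t)) (w (t+1) - wstar) : ℝ) := by
      rw [← inner_sub_right]; congr 1; abel
    have hsm2 : L / 2 * ‖w (t+1) - w t‖ ^ 2 ≤ ‖w t - w (t+1)‖ ^ 2 * (η⁻¹ / 2) := by
      rw [norm_sub_rev]
      nlinarith [sq_nonneg ‖w t - w (t+1)‖]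
    have hIη : η⁻¹ * (inner ℝ (w t - w (t+1)) (w (t+1) - wstar) : ℝ)
        = (‖w t - wstar‖ ^ 2 - ‖w (t+1) - wstar‖ ^ 2 - ‖w t - w (t+1)‖ ^ 2) * (η⁻¹ / 2) := by
      linear_combination (η⁻¹ / 2) * hident
    have hgoal2 : (‖w t - wstar‖ ^ 2 - ‖w (t+1) - wstar‖ ^ 2) / (2 * η)
        = (‖w t - wstar‖ ^ 2 - ‖w (t+1) - wstar‖ ^ 2 - ‖w t - w (t+1)‖ ^ 2) * (η⁻¹ / 2)
          + ‖w t - w (t+1)‖ ^ 2 * (η⁻¹ / 2) := by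
      rw [div_eq_mul_inv, mul_inv]
      ring
    rw [hgoal2]
    linarith [hdesc, hfo, hcs, hinner, hinner2, hεbd, hIη, hsm2]
  -- sum the per-step bounds
  have hsum : ∑ t ∈ range T, (Ψ (w (t+1)) - Ψ wstar)
      ≤ ‖w 0 - wstar‖ ^ 2 / (2 * η) + T * (R * ε) := by
    have h1 : ∑ t ∈ range T, (Ψ (w (t+1)) - Ψ wstar)
        ≤ ∑ t ∈ range T,
          ((‖w t - wstar‖ ^ 2 - ‖w (t+1) - wstar‖ ^ 2) / (2 * η) + R * ε) :=
      Finset.sum_le_sum fun t _ => key t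
    have h2 : ∑ t ∈ range T,
          ((‖w t - wstar‖ ^ 2 - ‖w (t+1) - wstar‖ ^ 2) / (2 * η) + R * ε)
        = (‖w 0 - wstar‖ ^ 2 - ‖w T - wstar‖ ^ 2) / (2 * η) + T * (R * ε) := by
      rw [Finset.sum_add_distrib, ← Finset.sum_div,
        Finset.sum_range_sub' (fun t => ‖w t - wstar‖ ^ 2) T]
      simp [mul_comm]
    have h3 : (‖w 0 - wstar‖ ^ 2 - ‖w T - wstar‖ ^ 2) / (2 * η)
        ≤ ‖w 0 - wstar‖ ^ 2 / (2 * η) := by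
      apply div_le_div_of_nonneg_right ?_ (by linarith) |>.trans_eq rfl
      · nlinarith [sq_nonneg ‖w T - wstar‖]
    calc ∑ t ∈ range T, (Ψ (w (t+1)) - Ψ wstar) ≤ _ := h1
      _ = _ := h2
      _ ≤ _ := by linarith
  -- Jensen
  have hTpos : (0:ℝ) < T := Nat.cast_pos.mpr hT
  have hjensen : Ψ ((T : ℝ)⁻¹ • ∑ t ∈ Finset.Icc 1 T, w t)
      ≤ ∑ t ∈ Finset.Icc 1 T, (T : ℝ)⁻¹ * Ψ (w t) := by
    have hcard : (Finset.Icc 1 T).card = T := by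
      rw [Nat.card_Icc]; omega
    have h := hconv.map_sum_le (t := Finset.Icc 1 T) (w := fun _ => (T:ℝ)⁻¹)
      (p := fun t => w t)
      (fun i _ => by positivity)
      (by rw [Finset.sum_const, hcard, nsmul_eq_mul, mul_inv_cancel₀ hTpos.ne'])
      (fun i _ => Set.mem_univ _)
    simpa [Finset.smul_sum, smul_smul] using h
  have hshift : ∑ t ∈ Finset.Icc 1 T, (Ψ (w t) - Ψ wstar)
      = ∑ t ∈ range T, (Ψ (w (t+1)) - Ψ wstar) := by
    have : Finset.Icc 1 T = Finset.Ico 1 (T+1) := by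
      rw [Finset.Ico_add_one_right_eq_Icc]
    rw [this, Finset.sum_Ico_eq_sum_range]
    simp [add_comm]
  have hfinal : ∑ t ∈ Finset.Icc 1 T, (T : ℝ)⁻¹ * Ψ (w t) - Ψ wstar
      ≤ ‖w 0 - wstar‖ ^ 2 / (2 * η * T) + R * ε := by
    have he : ∑ t ∈ Finset.Icc 1 T, (T : ℝ)⁻¹ * Ψ (w t) - Ψ wstar
        = (T:ℝ)⁻¹ * ∑ t ∈ Finset.Icc 1 T, (Ψ (w t) - Ψ wstar) := by
      have hcard : (Finset.Icc 1 T).card = T := by rw [Nat.card_Icc]; omega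
      rw [Finset.mul_sum]
      simp only [mul_sub]
      rw [Finset.sum_sub_distrib, Finset.sum_const, hcard, nsmul_eq_mul,
        ← mul_assoc, mul_inv_cancel₀ hTpos.ne', one_mul]
    rw [he, hshift]
    have := mul_le_mul_of_nonneg_left hsum (le_of_lt (inv_pos.mpr hTpos))
    calc (T:ℝ)⁻¹ * ∑ t ∈ range T, (Ψ (w (t+1)) - Ψ wstar)
        ≤ (T:ℝ)⁻¹ * (‖w 0 - wstar‖ ^ 2 / (2 * η) + T * (R * ε)) := this
      _ = ‖w 0 - wstar‖ ^ 2 / (2 * η * T) + R * ε := by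
          field_simp
  linarith [hjensen, hfinal]
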